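/- Let t ≥ 3 be an integer and let e₁,…,e_t and n₁,…,n_t be integers all ≥ 1. Define the integer η(e,n) := ∏_{i=1}^{t} C(2e_i+n_i, n_i) − ( ∏_{i=1}^{t} C(e_i+n_i, n_i) − 1 )·( Σ_{i=1}^{t} n_i + 1 ) − 1. Then for every index i₀ ∈ {1,…,t}, replacing n_{i₀} by n_{i₀}+1 (keeping all other arguments fixed) does not decrease η; that is, η is non-decreasing in each variable n_i. -/

import Mathlib

open Finset


lemma aux_L1 (e n : ℕ) (he : 1 ≤ e) : (n+2) * (e+n).choose n ≤ 2 * (2*e+n).choose n := by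
  obtain ⟨k, rfl⟩ := Nat.exists_eq_add_of_le he
  clear he
  induction k with
  | zero =>
    have h2 := Nat.choose_mul_succ_eq (n+1) n
    rw [Nat.choose_succ_self_right] at h2
    have hsub : n+1+1-n = 2 := by omega
    rw [hsub] at h2
    have e1 : 1+0+n = n+1 := by ring
    have e2 : 2*(1+0)+n = n+1+1 := by ring
    rw [e1, e2, Nat.choose_succ_self_right]
    nlinarith [h2]
  | succ k ih =>
    set e := 1 + k with hek
    have e1 : 1+(k+1)+n = e+n+1 := by omega
    have e2 : 2*(1+(k+1))+n = 2*e+n+1+1 := by omega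
    rw [e1, e2]
    -- cast to ℤ
    have h1 := Nat.choose_mul_succ_eq (2*e+n) n
    have h2 := Nat.choose_mul_succ_eq (2*e+n+1) n
    have h3 := Nat.choose_mul_succ_eq (e+n) n
    have s1 : 2*e+n+1-n = 2*e+1 := by omega
    have s2 : 2*e+n+1+1-n = 2*e+2 := by omega
    have s3 : e+n+1-n = e+1 := by omega
    rw [s1] at h1; rw [s2] at h2; rw [s3] at h3
    zify at ih h1 h2 h3 ⊢
    set A : ℤ := ((2*e+n).choose n : ℤ)
    set A1 : ℤ := ((2*e+n+1).choose n : ℤ)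
    set A2 : ℤ := ((2*e+n+1+1).choose n : ℤ)
    set B : ℤ := ((e+n).choose n : ℤ)
    set B1 : ℤ := ((e+n+1).choose n : ℤ)
    have hApos : (0:ℤ) ≤ A := Int.natCast_nonneg _
    have key : (2*(e+n+1)*(2*e+1) : ℤ) ≤ (2*e+n+1)*(2*e+n+1+1) := by nlinarith [Int.natCast_nonneg n, Int.natCast_nonneg e]
    have comb : ((n:ℤ)+2)*B*(2*(e+n+1)*(2*e+1)) ≤ 2*A*((2*e+n+1)*(2*e+n+1+1)) :=
      mul_le_mul ih key (by positivity) (by positivity)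
    have comb2 : ((n:ℤ)+2)*B*(2*(e+n+1)*(2*e+1))*(e+1) ≤ 2*A*((2*e+n+1)*(2*e+n+1+1))*(e+1) :=
      mul_le_mul_of_nonneg_right comb (by positivity)
    have LHSeq : ((n:ℤ)+2)*B1*((e+1)*((2*e+1)*(2*e+2))) = ((n:ℤ)+2)*B*(e+n+1)*(2*e+1)*(2*e+2) := by
      linear_combination (((n:ℤ)+2)*(2*e+1)*(2*e+2)) * h3.symm
    have RHSeq : (2*A2*((e+1)*((2*e+1)*(2*e+2))) : ℤ) = 2*A*((2*e+n+1)*(2*e+n+1+1))*(e+1) := by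
      linear_combination (2*((e:ℤ)+1)*(2*e+1))*h2.symm + (2*((e:ℤ)+1)*(2*e+n+1+1))*h1.symm
    have big : ((n:ℤ)+2)*B1*((e+1)*((2*e+1)*(2*e+2))) ≤ 2*A2*((e+1)*((2*e+1)*(2*e+2))) := by
      nlinarith [comb2, LHSeq, RHSeq]
    have hcpos : (0:ℤ) < (e+1)*((2*e+1)*(2*e+2)) := by positivity
    exact le_of_mul_le_mul_right big hcpos


-- product superadditivity for factors ≥ 3
lemma aux_L3a {ι : Type*} [DecidableEq ι] (s : Finset ι) (x : ι → ℕ) (hx : ∀ i ∈ s, 3 ≤ x i) :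
    3^s.card * (∑ i ∈ s, x i) + 3^(s.card+1) ≤ 3 * ∏ i ∈ s, x i + s.card * 3^(s.card+1) := by
  induction s using Finset.cons_induction with
  | empty => simp
  | cons a s ha ih =>
    have hxa : 3 ≤ x a := hx a (Finset.mem_cons_self a s)
    have ih' := ih (fun i hi => hx i (Finset.mem_cons_of_mem hi))
    set k := s.card with hk
    have hP : 3^k ≤ ∏ i ∈ s, x i := by
      calc 3^k = ∏ _i ∈ s, 3 := by rw [Finset.prod_const, hk]
      _ ≤ ∏ i ∈ s, x i := Finset.prod_le_prod' (fun i hi => hx i (Finset.mem_cons_of_mem hi))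
    rw [Finset.card_cons, Finset.prod_cons, Finset.sum_cons]
    set P := ∏ i ∈ s, x i with hPdef
    set S := ∑ i ∈ s, x i with hSdef
    -- goal: 3^(k+1) * (x a + S) + 3^(k+2) ≤ 3 * (x a * P) + (k+1) * 3^(k+2)
    have hq : 3*P + x a * 3^k ≤ 3*3^k + x a * P := by
      have := mul_add_mul_le_mul_add_mul hxa hP
      linarith [this]
    have h3 : 3^(k+1) = 3*3^k := by ring
    have h4 : 3^(k+1+1) = 9*3^k := by ring
    have h5 : 3^(k+1) * (x a + S) = 3*(3^k * S) + 3*3^k*x a := by ring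
    nlinarith [ih', hq]

lemma aux_pow1 (k : ℕ) (hk : 2 ≤ k) : 2^k * 2 ≤ 3^k := by
  induction k with
  | zero => omega
  | succ m ih =>
    rcases Nat.lt_or_ge m 2 with h | h
    · interval_cases m <;> first | omega | norm_num
    · have := ih h
      have : 2^(m+1)*2 = 2*(2^m*2) := by ring
      calc 2^(m+1)*2 = 2*(2^m*2) := by ring
        _ ≤ 3*(3^m) := by have h0 := Nat.one_le_two_pow (n:=m); linarith
        _ = 3^(m+1) := by ring

lemma aux_pow2 (k : ℕ) (hk : 3 ≤ k) : 2^k * (k+5) ≤ 3^k * 3 := by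
  induction k with
  | zero => omega
  | succ m ih =>
    rcases Nat.lt_or_ge m 3 with h | h
    · interval_cases m <;> first | omega | norm_num
    · have hm := ih h
      calc 2^(m+1)*(m+1+5) = 2*(2^m*(m+5)) + 2^(m+1) := by ring
        _ ≤ 3*(3^m*3) := by
            have h2 : 2^(m+1) ≤ 3^m*3 := by
              calc 2^(m+1) ≤ 2^(m+1)*2 := by omega
                _ ≤ 3^(m+1) := aux_pow1 (m+1) (by omega)
                _ = 3^m*3 := by ring
            linarith
        _ = 3^(m+1)*3 := by ring


lemma aux_L3 (t : ℕ) (ht : 3 ≤ t) (n : Fin t → ℕ) (hn : ∀ i, 1 ≤ n i) (i₀ : Fin t)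
    (hcase : 4 ≤ t ∨ ∃ j, 2 ≤ n j) :
    2^(t-1) * ((∑ i, n i) + n i₀ + 3) ≤ ∏ i, (n i + 2) := by
  set S := ∑ i, n i with hS
  set P := ∏ i, (n i + 2) with hP
  -- S ≥ t
  have hSt : t ≤ S := by
    calc t = ∑ _i : Fin t, 1 := by simp
    _ ≤ S := Finset.sum_le_sum (fun i _ => hn i)
  -- n i₀ ≤ S - (t-1)
  have hni : n i₀ + (t-1) ≤ S := by
    have h1 : n i₀ + ∑ i ∈ Finset.univ.erase i₀, n i = S := Finset.add_sum_erase _ n (mem_univ i₀)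
    have h2 : t - 1 ≤ ∑ i ∈ Finset.univ.erase i₀, n i := by
      calc t - 1 = ∑ _i ∈ Finset.univ.erase i₀, 1 := by
            rw [Finset.sum_const, smul_eq_mul, mul_one, Finset.card_erase_of_mem (mem_univ i₀), Finset.card_univ, Fintype.card_fin]
      _ ≤ _ := Finset.sum_le_sum (fun i _ => hn i)
    omega
  -- from L3a: P ≥ 3^(t-1) * (S - t + 3)
  have hsum2 : ∑ i : Fin t, (n i + 2) = S + 2*t := by
    rw [Finset.sum_add_distrib]
    simp [hS, two_mul, Finset.card_univ, mul_comm]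
  have hL3a : 3^t * (S + 2*t) + 3^(t+1) ≤ 3 * P + t * 3^(t+1) := by
    have h := aux_L3a Finset.univ (fun i => n i + 2)
      (fun i _ => by show 3 ≤ n i + 2; have := hn i; omega)
    simp only [Finset.card_univ, Fintype.card_fin] at h
    simpa [hsum2, hP] using h
  -- set u := S - t
  obtain ⟨u, hu⟩ : ∃ u, S = t + u := ⟨S - t, by omega⟩
  have hkey : 3^(t-1) * (u + 3) ≤ P := by
    have h3t : 3^t = 3^(t-1) * 3 := by
      rw [← pow_succ]; congr 1; omega
    have h3t1 : 3^(t+1) = 3^(t-1) * 9 := by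
      rw [show t+1 = (t-1)+2 by omega, pow_add]; norm_num
    -- hL3a : 3^t * (S + 2t) + 3^(t+1) ≤ 3*P + t * 3^(t+1)
    have expand : 3^t * (S + 2*t) + 3^(t+1) = 3 * (3^(t-1) * (u+3)) + t * 3^(t+1) := by
      rw [hu, h3t, h3t1]; ring
    omega
  -- bound target
  have htarget : S + n i₀ + 3 ≤ 2*u + t + 4 := by omega
  have hmono : 2^(t-1) * (S + n i₀ + 3) ≤ 2^(t-1) * (2*u + t + 4) :=
    Nat.mul_le_mul_left _ htarget
  refine le_trans hmono (le_trans ?_ hkey)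
  -- 2^(t-1) * (2u + t + 4) ≤ 3^(t-1) * (u+3)
  rcases hcase with h4 | ⟨j, hj⟩
  · -- t ≥ 4: k = t-1 ≥ 3
    set k := t - 1 with hk
    have hkt : t = k + 1 := by omega
    have h1 : 2^k * (2*u) ≤ 3^k * u := by
      have := aux_pow1 k (by omega)
      calc 2^k * (2*u) = (2^k*2)*u := by ring
      _ ≤ 3^k * u := Nat.mul_le_mul_right _ this
    have h2 : 2^k * (k + 5) ≤ 3^k * 3 := aux_pow2 k (by omega)
    calc 2^k * (2*u + t + 4) = 2^k * (2*u) + 2^k * (k+5) := by rw [hkt]; ring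
    _ ≤ 3^k * u + 3^k * 3 := Nat.add_le_add h1 h2
    _ = 3^k * (u + 3) := by ring
  · -- t = 3 or t ≥ 4; if t = 3 then u ≥ 1
    rcases Nat.lt_or_ge t 4 with h3 | h4
    · have ht3 : t = 3 := by omega
      have hu1 : 1 ≤ u := by
        have h1 : n j + (t-1) ≤ S := by
          have h1' : n j + ∑ i ∈ Finset.univ.erase j, n i = S := Finset.add_sum_erase _ n (mem_univ j)
          have h2' : t - 1 ≤ ∑ i ∈ Finset.univ.erase j, n i := by
            calc t - 1 = ∑ _i ∈ Finset.univ.erase j, 1 := by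
                  rw [Finset.sum_const, smul_eq_mul, mul_one, Finset.card_erase_of_mem (mem_univ j), Finset.card_univ, Fintype.card_fin]
            _ ≤ _ := Finset.sum_le_sum (fun i _ => hn i)
          omega
        omega
      subst ht3
      norm_num
      omega
    · set k := t - 1 with hk
      have hkt : t = k + 1 := by omega
      have h1 : 2^k * (2*u) ≤ 3^k * u := by
        have := aux_pow1 k (by omega)
        calc 2^k * (2*u) = (2^k*2)*u := by ring
        _ ≤ 3^k * u := Nat.mul_le_mul_right _ this
      have h2 : 2^k * (k + 5) ≤ 3^k * 3 := aux_pow2 k (by omega)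
      calc 2^k * (2*u + t + 4) = 2^k * (2*u) + 2^k * (k+5) := by rw [hkt]; ring
      _ ≤ 3^k * u + 3^k * 3 := Nat.add_le_add h1 h2
      _ = 3^k * (u + 3) := by ring


lemma aux_MAIN (t : ℕ) (ht : 3 ≤ t) (e n : Fin t → ℕ) (he : ∀ i, 1 ≤ e i) (hn : ∀ i, 1 ≤ n i)
    (i₀ : Fin t) :
    (∏ i, (e i + n i).choose (n i)) * (e i₀ * ((∑ i, n i) + 2) + n i₀ + 1)
      ≤ 2 * e i₀ * (∏ i, (2 * e i + n i).choose (n i)) + (n i₀ + 1) := by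
  by_cases hc : 4 ≤ t ∨ ∃ j, 2 ≤ n j
  · -- main case
    set PA := ∏ i, (2 * e i + n i).choose (n i) with hPA
    set PB := ∏ i, (e i + n i).choose (n i) with hPB
    set S := ∑ i, n i with hS
    set E := e i₀
    set N := n i₀
    have hprod : (∏ i, (n i + 2)) * PB ≤ 2^t * PA := by
      have h := Finset.prod_le_prod' (s := Finset.univ)
        (f := fun i => (n i + 2) * (e i + n i).choose (n i))
        (g := fun i => 2 * (2 * e i + n i).choose (n i))
        (fun i _ => aux_L1 (e i) (n i) (he i))
      rw [Finset.prod_mul_distrib, Finset.prod_mul_distrib, Finset.prod_const,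
        Finset.card_univ, Fintype.card_fin] at h
      exact h
    have hl3 := aux_L3 t ht n hn i₀ hc
    have hstep1 : PB * (E * (S + N + 3)) ≤ 2 * E * PA := by
      have hpos : 0 < 2^(t-1) := Nat.pow_pos (by norm_num)
      apply Nat.le_of_mul_le_mul_left _ hpos
      calc 2^(t-1) * (PB * (E * (S + N + 3)))
          = E * (PB * (2^(t-1) * (S + N + 3))) := by ring
        _ ≤ E * (PB * ∏ i, (n i + 2)) :=
            Nat.mul_le_mul_left _ (Nat.mul_le_mul_left _ hl3)
        _ = E * ((∏ i, (n i + 2)) * PB) := by ring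
        _ ≤ E * (2^t * PA) := Nat.mul_le_mul_left _ hprod
        _ = 2^(t-1) * (2 * E * PA) := by
            rw [show (2:ℕ)^t = 2^(t-1) * 2 by rw [← pow_succ]; congr 1; omega]; ring
    have hstep0 : E * (S + 2) + N + 1 ≤ E * (S + N + 3) := by
      have h1 : N + 1 ≤ E * (N + 1) := Nat.le_mul_of_pos_left _ (he i₀)
      have h2 : E * (S + N + 3) = E * (S + 2) + E * (N + 1) := by ring
      omega
    calc PB * (E * (S + 2) + N + 1) ≤ PB * (E * (S + N + 3)) := Nat.mul_le_mul_left _ hstep0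
      _ ≤ 2 * E * PA := hstep1
      _ ≤ 2 * E * PA + (N + 1) := Nat.le_add_right _ _
  · -- exceptional case : t = 3, all n i = 1
    push_neg at hc
    obtain ⟨ht4, hn2⟩ := hc
    have ht3 : t = 3 := by omega
    subst ht3
    have hn1 : ∀ j, n j = 1 := fun j => by have := hn j; have := hn2 j; omega
    obtain ⟨x, hx⟩ := Nat.exists_eq_add_of_le (he 0)
    obtain ⟨y, hy⟩ := Nat.exists_eq_add_of_le (he 1)
    obtain ⟨z, hz⟩ := Nat.exists_eq_add_of_le (he 2)
    have hE : e i₀ = 1 + x ∨ e i₀ = 1 + y ∨ e i₀ = 1 + z := by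
      fin_cases i₀
      · exact Or.inl hx
      · exact Or.inr (Or.inl hy)
      · exact Or.inr (Or.inr hz)
    simp only [Fin.prod_univ_three, Fin.sum_univ_three, hn1, Nat.choose_one_right, hx, hy, hz]
    rcases hE with hEe | hEe | hEe <;> rw [hEe] <;>
      nlinarith [Nat.zero_le (x*y*z), Nat.zero_le (x*y), Nat.zero_le (x*z), Nat.zero_le (y*z),
        Nat.zero_le (x*x*y*z), Nat.zero_le (y*y*x*z), Nat.zero_le (z*z*x*y),
        Nat.zero_le (x*x*y), Nat.zero_le (x*x*z), Nat.zero_le (y*y*x), Nat.zero_le (y*y*z),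
        Nat.zero_le (z*z*x), Nat.zero_le (z*z*y)]

/-- η(e,n) = ∏ᵢ C(2eᵢ+nᵢ, nᵢ) − (∏ᵢ C(eᵢ+nᵢ, nᵢ) − 1)·(Σᵢ nᵢ + 1) − 1, as an integer. -/
def eta {t : ℕ} (e n : Fin t → ℕ) : ℤ :=
  (∏ i, ((2 * e i + n i).choose (n i) : ℤ))
    - ((∏ i, ((e i + n i).choose (n i) : ℤ)) - 1) * ((∑ i, (n i : ℤ)) + 1) - 1

theorem stmt_16 (t : ℕ) (ht : 3 ≤ t) (e n : Fin t → ℕ)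
    (he : ∀ i, 1 ≤ e i) (hn : ∀ i, 1 ≤ n i) (i₀ : Fin t) :
    eta e n ≤ eta e (Function.update n i₀ (n i₀ + 1)) := by
  classical
  set n' := Function.update n i₀ (n i₀ + 1) with hn'def
  have hn'i : n' i₀ = n i₀ + 1 := Function.update_self _ _ _
  have hn'ne : ∀ i, i ≠ i₀ → n' i = n i := fun i h => Function.update_of_ne h _ _
  set N := n i₀ with hN
  set E := e i₀ with hE
  set R := ∏ i ∈ Finset.univ.erase i₀, (2 * e i + n i).choose (n i) with hR
  set Q := ∏ i ∈ Finset.univ.erase i₀, (e i + n i).choose (n i) with hQ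
  set S0 := ∑ i ∈ Finset.univ.erase i₀, n i with hS0
  -- decompositions
  have f1 : ∏ i, (2 * e i + n i).choose (n i) = (2*E+N).choose N * R :=
    (Finset.mul_prod_erase _ _ (mem_univ i₀)).symm
  have f2 : ∏ i, (e i + n i).choose (n i) = (E+N).choose N * Q :=
    (Finset.mul_prod_erase _ _ (mem_univ i₀)).symm
  have f3 : ∑ i, n i = N + S0 := (Finset.add_sum_erase _ _ (mem_univ i₀)).symm
  have hRQ1 : ∏ i ∈ Finset.univ.erase i₀, (2 * e i + n' i).choose (n' i) = R :=
    Finset.prod_congr rfl (fun i hi => by rw [hn'ne i (Finset.ne_of_mem_erase hi)])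
  have hRQ2 : ∏ i ∈ Finset.univ.erase i₀, (e i + n' i).choose (n' i) = Q :=
    Finset.prod_congr rfl (fun i hi => by rw [hn'ne i (Finset.ne_of_mem_erase hi)])
  have hRQ3 : ∑ i ∈ Finset.univ.erase i₀, n' i = S0 :=
    Finset.sum_congr rfl (fun i hi => by rw [hn'ne i (Finset.ne_of_mem_erase hi)])
  have f1' : ∏ i, (2 * e i + n' i).choose (n' i) = (2*E+N+1).choose (N+1) * R := by
    rw [← Finset.mul_prod_erase _ _ (mem_univ i₀), hRQ1, hn'i]
    congr 2
  have f2' : ∏ i, (e i + n' i).choose (n' i) = (E+N+1).choose (N+1) * Q := by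
    rw [← Finset.mul_prod_erase _ _ (mem_univ i₀), hRQ2, hn'i]
    congr 2
  have f3' : ∑ i, n' i = N + 1 + S0 := by
    rw [← Finset.add_sum_erase _ _ (mem_univ i₀), hRQ3, hn'i]
  -- eta in terms of atoms
  have g1 : eta e n = ((2*E+N).choose N : ℤ) * R - (((E+N).choose N : ℤ) * Q - 1) * ((S0:ℤ) + N + 1) - 1 := by
    unfold eta
    rw [← Nat.cast_prod, ← Nat.cast_prod, ← Nat.cast_sum, f1, f2, f3]
    push_cast
    ring
  have g2 : eta e n' = ((2*E+N+1).choose (N+1) : ℤ) * R - (((E+N+1).choose (N+1) : ℤ) * Q - 1) * ((S0:ℤ) + N + 2) - 1 := by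
    unfold eta
    rw [← Nat.cast_prod, ← Nat.cast_prod, ← Nat.cast_sum, f1', f2', f3']
    push_cast
    ring
  -- recurrences
  have hA : ((2*E+N+1 : ℕ) : ℤ) * ((2*E+N).choose N : ℤ) = ((2*E+N+1).choose (N+1) : ℤ) * ((N:ℤ)+1) := by
    exact_mod_cast congrArg (Nat.cast : ℕ → ℤ) (Nat.add_one_mul_choose_eq (2*E+N) N)
  have hB : ((E+N+1 : ℕ) : ℤ) * ((E+N).choose N : ℤ) = ((E+N+1).choose (N+1) : ℤ) * ((N:ℤ)+1) := by
    exact_mod_cast congrArg (Nat.cast : ℕ → ℤ) (Nat.add_one_mul_choose_eq (E+N) N)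
  -- main inequality casted
  have hmain : (((E+N).choose N : ℤ) * Q) * ((E:ℤ) * ((N + S0 : ℤ) + 2) + N + 1)
      ≤ 2 * (E:ℤ) * (((2*E+N).choose N : ℤ) * R) + ((N:ℤ) + 1) := by
    have h := aux_MAIN t ht e n he hn i₀
    rw [f1, f2, f3] at h
    exact_mod_cast h
  rw [g1, g2]
  have hpos : (0:ℤ) < (N:ℤ) + 1 := by positivity
  rw [← mul_le_mul_iff_right₀ hpos]
  set A : ℤ := ((2*E+N).choose N : ℤ)
  set A' : ℤ := ((2*E+N+1).choose (N+1) : ℤ)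
  set B : ℤ := ((E+N).choose N : ℤ)
  set B' : ℤ := ((E+N+1).choose (N+1) : ℤ)
  push_cast at hA hB
  have hid : ((N:ℤ)+1) * (A' * R - (B' * Q - 1) * ((S0:ℤ) + N + 2) - 1)
      = ((N:ℤ)+1) * (A * R - (B * Q - 1) * ((S0:ℤ) + N + 1) - 1)
        + (2 * (E:ℤ) * (A * R) + ((N:ℤ) + 1) - (B * Q) * ((E:ℤ) * ((N + S0 : ℤ) + 2) + N + 1)) := by
    linear_combination (-(R : ℤ)) * hA + ((S0:ℤ) + (N:ℤ) + 2) * (Q:ℤ) * hB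
  linarith [hmain, hid]
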